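/- Let h : ℝ^n → ℝ be convex and ℓ-Lipschitz continuous, and let 0 < μ₂ ≤ μ₁. Then for every y ∈ ℝ^n, h_{μ₂}(y) ≤ h_{μ₁}(y) + (1/2) · ((μ₁ - μ₂)/μ₂) · μ₁ · ℓ². -/

import Mathlib

open Set

/-- Moreau envelope comparison for a Lipschitz convex function. -/
theorem moreau_envelope_param_mono_lipschitz {n : ℕ} (h : EuclideanSpace ℝ (Fin n) → ℝ)
    (hconv : ConvexOn ℝ Set.univ h) (ℓ : NNReal) (hlip : LipschitzWith ℓ h)
    (μ₁ μ₂ : ℝ) (hμ₂ : 0 < μ₂) (hμ : μ₂ ≤ μ₁)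
    (y p₁ p₂ : EuclideanSpace ℝ (Fin n))
    (hp₁ : IsMinOn (fun z => h z + ‖z - y‖ ^ 2 / (2 * μ₁)) Set.univ p₁)
    (hp₂ : IsMinOn (fun z => h z + ‖z - y‖ ^ 2 / (2 * μ₂)) Set.univ p₂) :
    h p₂ + ‖p₂ - y‖ ^ 2 / (2 * μ₂) ≤
      h p₁ + ‖p₁ - y‖ ^ 2 / (2 * μ₁)
        + (1 / 2) * ((μ₁ - μ₂) / μ₂) * μ₁ * (ℓ : ℝ) ^ 2 := by
  have hμ₁ : 0 < μ₁ := hμ₂.trans_le hμ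
  set d : ℝ := ‖p₁ - y‖ with hd_def
  have hd0 : 0 ≤ d := norm_nonneg _
  -- Lipschitz bound
  have hLip : h y ≤ h p₁ + ℓ * d := by
    have h1 : dist (h y) (h p₁) ≤ ℓ * d := by
      have := hlip.dist_le_mul y p₁
      simpa [dist_eq_norm, hd_def, norm_sub_rev y p₁] using this
    rw [Real.dist_eq] at h1
    have := abs_le.mp h1
    linarith [this.2]
  -- key inequality for all t ∈ (0,1]
  have key : ∀ t : ℝ, 0 < t → t ≤ 1 → 2 * d ^ 2 ≤ 2 * μ₁ * ℓ * d + t * d ^ 2 := by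
    intro t ht0 ht1
    have hz := hp₁ (mem_univ ((1 - t) • p₁ + t • y))
    simp only [Set.mem_setOf_eq] at hz
    have hnorm : ‖(1 - t) • p₁ + t • y - y‖ = (1 - t) * d := by
      have : (1 - t) • p₁ + t • y - y = (1 - t) • (p₁ - y) := by
        module
      rw [this, norm_smul, Real.norm_eq_abs, abs_of_nonneg (by linarith)]
    have hcv := hconv.2 (mem_univ p₁) (mem_univ y) (by linarith : (0:ℝ) ≤ 1 - t)
      ht0.le (by ring)
    rw [hnorm] at hz
    -- hz : h p₁ + d^2/(2μ₁) ≤ h((1-t)p₁ + t y) + ((1-t)d)^2/(2μ₁)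
    have hcomb : h p₁ + d ^ 2 / (2 * μ₁) ≤
        (1 - t) * h p₁ + t * h y + ((1 - t) * d) ^ 2 / (2 * μ₁) := by
      calc h p₁ + d ^ 2 / (2 * μ₁) ≤ _ := hz
        _ ≤ (1 - t) * h p₁ + t * h y + ((1 - t) * d) ^ 2 / (2 * μ₁) := by
            have := hcv
            simp only [smul_eq_mul] at this
            linarith
    have hty : t * h y ≤ t * (h p₁ + ℓ * d) := by
      exact mul_le_mul_of_nonneg_left hLip ht0.le
    have h2 : d ^ 2 / (2 * μ₁) - ((1 - t) * d) ^ 2 / (2 * μ₁) ≤ t * (ℓ * d) := by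
      nlinarith
    have h3 : d ^ 2 - ((1 - t) * d) ^ 2 ≤ 2 * μ₁ * (t * (ℓ * d)) := by
      have := mul_le_mul_of_nonneg_left h2 (by positivity : (0:ℝ) ≤ 2 * μ₁)
      rw [mul_sub, mul_div_cancel₀ _ (by positivity), mul_div_cancel₀ _ (by positivity)] at this
      linarith
    -- d^2 - (1-t)^2 d^2 = t(2-t)d^2
    have h4 : t * (2 - t) * d ^ 2 ≤ 2 * μ₁ * t * (ℓ * d) := by nlinarith
    have h5 : (2 - t) * d ^ 2 ≤ 2 * μ₁ * (ℓ * d) := by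
      have := (mul_le_mul_iff_right₀ ht0).mp (by nlinarith : t * ((2 - t) * d ^ 2) ≤ t * (2 * μ₁ * (ℓ * d)))
      linarith
    nlinarith
  -- conclude 2 d^2 ≤ 2 μ₁ ℓ d
  have hmain : 2 * d ^ 2 ≤ 2 * μ₁ * ℓ * d := by
    apply le_of_forall_pos_le_add
    intro ε hε
    rcases eq_or_lt_of_le hd0 with hd | hd
    · have := key 1 one_pos le_rfl
      nlinarith
    · set t : ℝ := min 1 (ε / d ^ 2) with ht_def
      have ht0 : 0 < t := lt_min one_pos (by positivity)
      have ht1 : t ≤ 1 := min_le_left _ _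
      have := key t ht0 ht1
      have htd : t * d ^ 2 ≤ ε := by
        calc t * d ^ 2 ≤ (ε / d ^ 2) * d ^ 2 :=
              mul_le_mul_of_nonneg_right (min_le_right _ _) (by positivity)
          _ = ε := by field_simp
      linarith
  have hdle : d ≤ μ₁ * ℓ := by
    rcases eq_or_lt_of_le hd0 with hd | hd
    · rw [← hd]; positivity
    · nlinarith
  -- envelope comparison
  have hstep := hp₂ (mem_univ p₁)
  simp only [Set.mem_setOf_eq] at hstep
  have hfinal : d ^ 2 / (2 * μ₂) ≤ d ^ 2 / (2 * μ₁)
      + (1 / 2) * ((μ₁ - μ₂) / μ₂) * μ₁ * (ℓ : ℝ) ^ 2 := by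
    have hd2 : d ^ 2 ≤ (μ₁ * ℓ) ^ 2 := by nlinarith
    have e1 : d ^ 2 / (2 * μ₂) = d ^ 2 / (2 * μ₁) + d ^ 2 * (μ₁ - μ₂) / (2 * μ₁ * μ₂) := by
      field_simp
      ring
    have e2 : (1 / 2) * ((μ₁ - μ₂) / μ₂) * μ₁ * (ℓ : ℝ) ^ 2
        = (μ₁ * ℓ) ^ 2 * (μ₁ - μ₂) / (2 * μ₁ * μ₂) := by
      field_simp
    rw [e1, e2]
    have hnum : d ^ 2 * (μ₁ - μ₂) ≤ (μ₁ * ℓ) ^ 2 * (μ₁ - μ₂) :=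
      mul_le_mul_of_nonneg_right hd2 (by linarith)
    have hq := mul_le_mul_of_nonneg_right hnum
      (by positivity : (0:ℝ) ≤ (2 * μ₁ * μ₂)⁻¹)
    simp only [div_eq_mul_inv]
    linarith
  calc h p₂ + ‖p₂ - y‖ ^ 2 / (2 * μ₂) ≤ h p₁ + d ^ 2 / (2 * μ₂) := hstep
    _ ≤ _ := by linarith
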